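/- Let ρ be a fixed density matrix on ℂ^N. Then the root fidelity map σ ↦ Tr √(√ρ σ √ρ) is concave on the convex set of density matrices on ℂ^N: for all density matrices σ₁, σ₂ and all t ∈ [0,1], Tr √(√ρ (t σ₁ + (1−t) σ₂) √ρ) ≥ t · Tr √(√ρ σ₁ √ρ) + (1−t) · Tr √(√ρ σ₂ √ρ). -/

import Mathlib

open Matrix
open scoped ComplexOrder

/-- The old Mathlib `Matrix.PosSemidef.sqrt` (removed upstream), restored with its
December 2024 definition. -/
noncomputable def Matrix.PosSemidef.sqrt {n : Type*} [Fintype n] [DecidableEq n]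
    {A : Matrix n n ℂ} (hA : A.PosSemidef) : Matrix n n ℂ :=
  (hA.1.eigenvectorUnitary : Matrix n n ℂ) * diagonal ((↑) ∘ Real.sqrt ∘ hA.1.eigenvalues) *
    (star (hA.1.eigenvectorUnitary : Matrix n n ℂ))

lemma Matrix.PosSemidef.posSemidef_sqrt {n : Type*} [Fintype n] [DecidableEq n]
    {A : Matrix n n ℂ} (hA : A.PosSemidef) : hA.sqrt.PosSemidef := by
  have hD : (diagonal ((↑) ∘ Real.sqrt ∘ hA.1.eigenvalues : n → ℂ)).PosSemidef :=
    Matrix.PosSemidef.diagonal (fun i => by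
      simp only [Function.comp_apply, Pi.zero_apply]
      exact_mod_cast Real.sqrt_nonneg _)
  have h := hD.conjTranspose_mul_mul_same (star (hA.1.eigenvectorUnitary : Matrix n n ℂ))
  unfold Matrix.PosSemidef.sqrt
  simpa [Matrix.star_eq_conjTranspose] using h

lemma Matrix.PosSemidef.sqrt_mul_self {n : Type*} [Fintype n] [DecidableEq n]
    {A : Matrix n n ℂ} (hA : A.PosSemidef) : hA.sqrt * hA.sqrt = A := by
  set U : Matrix n n ℂ := (hA.1.eigenvectorUnitary : Matrix n n ℂ) with hU
  have hUU : star U * U = 1 := Unitary.coe_star_mul_self _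
  have hspec := hA.1.spectral_theorem
  rw [Unitary.conjStarAlgAut_apply] at hspec
  unfold Matrix.PosSemidef.sqrt
  rw [← hU]
  have hDD : diagonal ((↑) ∘ Real.sqrt ∘ hA.1.eigenvalues : n → ℂ) *
      diagonal ((↑) ∘ Real.sqrt ∘ hA.1.eigenvalues) = diagonal ((↑) ∘ hA.1.eigenvalues) := by
    rw [diagonal_mul_diagonal]
    congr 1
    funext i
    simp only [Function.comp_apply]
    rw [← Complex.ofReal_mul, Real.mul_self_sqrt (hA.eigenvalues_nonneg i)]
  calc U * diagonal ((↑) ∘ Real.sqrt ∘ hA.1.eigenvalues) * star U *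
        (U * diagonal ((↑) ∘ Real.sqrt ∘ hA.1.eigenvalues) * star U)
      = U * (diagonal ((↑) ∘ Real.sqrt ∘ hA.1.eigenvalues) * (star U * U) *
        diagonal ((↑) ∘ Real.sqrt ∘ hA.1.eigenvalues)) * star U := by
        simp only [Matrix.mul_assoc]
    _ = A := by rw [hUU, Matrix.mul_one, hDD]; exact hspec.symm

/-- Positive-semidefinite square root of a matrix (zero if not PSD). -/
noncomputable def psdSqrt {N : ℕ} (A : Matrix (Fin N) (Fin N) ℂ) :
    Matrix (Fin N) (Fin N) ℂ :=
  open scoped Classical in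
  if h : A.PosSemidef then h.sqrt else 0

/-- Root fidelity `Tr √(√ρ σ √ρ)`. -/
noncomputable def rootFidelity {N : ℕ} (ρ σ : Matrix (Fin N) (Fin N) ℂ) : ℝ :=
  (psdSqrt (psdSqrt ρ * σ * psdSqrt ρ)).trace.re

/-- Fidelity `F(ρ,σ) = (Tr √(√ρ σ √ρ))²`. -/
noncomputable def fidelity {N : ℕ} (ρ σ : Matrix (Fin N) (Fin N) ℂ) : ℝ :=
  (rootFidelity ρ σ) ^ 2

/-- A density matrix: positive semidefinite with trace one. -/
def IsDensityMatrix {N : ℕ} (ρ : Matrix (Fin N) (Fin N) ℂ) : Prop :=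
  ρ.PosSemidef ∧ ρ.trace = 1

/-- A POVM: a family of PSD matrices summing to the identity. -/
def IsPOVM {N : ℕ} {C : Type*} [Fintype C] (M : C → Matrix (Fin N) (Fin N) ℂ) : Prop :=
  (∀ c, (M c).PosSemidef) ∧ ∑ c, M c = 1

/-- A Kraus family: `∑ Eₖᴴ Eₖ = I`. -/
def IsKrausFamily {N : ℕ} {K : Type*} [Fintype K] (E : K → Matrix (Fin N) (Fin N) ℂ) : Prop :=
  ∑ k, (E k)ᴴ * E k = 1

/-- The quantum channel associated with a Kraus family. -/
noncomputable def channel {N : ℕ} {K : Type*} [Fintype K]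
    (E : K → Matrix (Fin N) (Fin N) ℂ) (σ : Matrix (Fin N) (Fin N) ℂ) :
    Matrix (Fin N) (Fin N) ℂ :=
  ∑ k, E k * σ * (E k)ᴴ

/-- Minimum of `f` over all labels distinct from `cstar` (needs `|C| ≥ 2`). -/
noncomputable def minErase {C : Type*} [Fintype C] [DecidableEq C] {α : Type*} [LinearOrder α]
    (cstar : C) (h : 1 < Fintype.card C) (f : C → α) : α :=
  (Finset.univ.erase cstar).inf'
    ((Finset.erase_nonempty (Finset.mem_univ cstar)).mpr
      (Finset.one_lt_card_iff_nontrivial.mp (by simpa [Finset.card_univ] using h))) f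

lemma trace_re_nonneg' {N : ℕ} {A : Matrix (Fin N) (Fin N) ℂ} (hA : A.PosSemidef) :
    0 ≤ A.trace.re := by
  have h : ∀ i, 0 ≤ A i i := fun i => by
    exact hA.diag_nonneg
  rw [Matrix.trace, Complex.re_sum]
  exact Finset.sum_nonneg fun i _ => (Complex.le_def.mp (h i)).1

lemma smul_posSemidef' {t : ℝ} (ht : 0 ≤ t) {N : ℕ} {M : Matrix (Fin N) (Fin N) ℂ}
    (hM : M.PosSemidef) : ((t:ℂ) • M).PosSemidef := by
  refine Matrix.PosSemidef.of_dotProduct_mulVec_nonneg ?_ ?_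
  · unfold Matrix.IsHermitian
    rw [conjTranspose_smul]
    simp [hM.1.eq, Complex.conj_ofReal]
  · intro x
    rw [smul_mulVec, dotProduct_smul, smul_eq_mul]
    exact mul_nonneg (by exact_mod_cast ht) (hM.dotProduct_mulVec_nonneg x)

lemma smul_one_posDef' {ε : ℝ} (hε : 0 < ε) {N : ℕ} :
    ((ε:ℂ) • (1 : Matrix (Fin N) (Fin N) ℂ)).PosDef := by
  refine Matrix.PosDef.of_dotProduct_mulVec_pos ?_ ?_
  · unfold Matrix.IsHermitian
    rw [conjTranspose_smul]
    simp [Complex.conj_ofReal]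
  · intro x hx
    rw [smul_mulVec, dotProduct_smul, smul_eq_mul, one_mulVec]
    exact mul_pos (by exact_mod_cast hε) (dotProduct_star_self_pos_iff.mpr hx)

lemma amgm' {N : ℕ} {A X : Matrix (Fin N) (Fin N) ℂ} (hA : A.PosSemidef) (hX : X.PosDef) :
    2 * hA.sqrt.trace.re ≤ X.trace.re + ((A * X⁻¹).trace).re := by
  set S := hA.sqrt with hSdef
  have hS : S.PosSemidef := hA.posSemidef_sqrt
  have hSS : S * S = A := hA.sqrt_mul_self
  set C := hX.posSemidef.sqrt with hCdef
  have hC : C.PosSemidef := hX.posSemidef.posSemidef_sqrt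
  have hCH : Cᴴ = C := hC.1
  have hCC : C * C = X := hX.posSemidef.sqrt_mul_self
  have hdet : IsUnit C.det := by
    have h1 : C.det * C.det = X.det := by rw [← det_mul, hCC]
    have h2 : X.det ≠ 0 := hX.det_pos.ne'
    refine isUnit_iff_ne_zero.mpr fun h => h2 ?_
    rw [← h1, h, mul_zero]
  set D := C⁻¹ * S with hDdef
  have hDH : Dᴴ = S * C⁻¹ := by
    rw [hDdef, conjTranspose_mul, conjTranspose_nonsing_inv, hCH, hS.1]
  have hM : ((C - D)ᴴ * (C - D)).PosSemidef := posSemidef_conjTranspose_mul_self _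
  have hCD : Cᴴ * D = S := by
    rw [hCH, hDdef, ← mul_assoc, mul_nonsing_inv _ hdet, one_mul]
  have hDC : Dᴴ * C = S := by
    rw [hDH, mul_assoc, nonsing_inv_mul _ hdet, mul_one]
  have hDDtr : (Dᴴ * D).trace = (A * X⁻¹).trace := by
    rw [hDH, hDdef]
    have hXinv : X⁻¹ = C⁻¹ * C⁻¹ := by rw [← hCC, Matrix.mul_inv_rev]
    rw [trace_mul_comm]
    have h3 : (C⁻¹ * S) * (S * C⁻¹) = C⁻¹ * (A * C⁻¹) := by
      rw [← hSS]; noncomm_ring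
    rw [h3, trace_mul_comm, mul_assoc, ← hXinv]
  have hexp : ((C - D)ᴴ * (C - D)).trace
      = X.trace - S.trace - S.trace + (A * X⁻¹).trace := by
    rw [conjTranspose_sub, sub_mul, mul_sub, mul_sub, hCD, hDC]
    rw [trace_sub, trace_sub, trace_sub, hCH, hCC, hDDtr]
    ring
  have h0 := trace_re_nonneg' hM
  rw [hexp] at h0
  simp only [Complex.add_re, Complex.sub_re] at h0
  linarith

lemma upper_bound' {N : ℕ} {A : Matrix (Fin N) (Fin N) ℂ} (hA : A.PosSemidef) {ε : ℝ}
    (hε : 0 < ε) (X : Matrix (Fin N) (Fin N) ℂ) (hXdef : X = hA.sqrt + (ε:ℂ) • 1)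
    (hXpd : X.PosDef) :
    ((A * X⁻¹).trace).re ≤ hA.sqrt.trace.re := by
  subst hXdef
  set S := hA.sqrt with hSdef
  set X := S + (ε:ℂ) • 1 with hXdef2
  have hS : S.PosSemidef := hA.posSemidef_sqrt
  have hSS : S * S = A := hA.sqrt_mul_self
  have hXdet : IsUnit X.det := isUnit_iff_ne_zero.mpr hXpd.det_pos.ne'
  have h1 : S * X⁻¹ + (ε:ℂ) • X⁻¹ = 1 := by
    have h := mul_nonsing_inv X hXdet
    nth_rewrite 1 [hXdef2] at h
    rw [add_mul, smul_mul_assoc, one_mul] at h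
    exact h
  have h2 : S - A * X⁻¹ = (ε:ℂ) • (S * X⁻¹) :=
    calc S - A * X⁻¹ = S * (1 - S * X⁻¹) := by rw [mul_sub, mul_one, ← hSS, mul_assoc]
    _ = S * ((ε:ℂ) • X⁻¹) := by rw [← eq_sub_of_add_eq' h1]
    _ = (ε:ℂ) • (S * X⁻¹) := mul_smul_comm _ _ _
  have hXinv : X⁻¹.PosSemidef := hXpd.inv.posSemidef
  set Y := hXinv.sqrt with hYdef
  have hY : Y.PosSemidef := hXinv.posSemidef_sqrt
  have hYY : Y * Y = X⁻¹ := hXinv.sqrt_mul_self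
  have htr : (S * X⁻¹).trace = (Y * S * Y).trace := by
    rw [← hYY, ← mul_assoc, trace_mul_comm, ← mul_assoc]
  have hpos : 0 ≤ (S * X⁻¹).trace.re := by
    rw [htr]
    have h4 := hS.conjTranspose_mul_mul_same Y
    rw [hY.1] at h4
    exact trace_re_nonneg' h4
  have h3 : S.trace.re - (A * X⁻¹).trace.re = ε * (S * X⁻¹).trace.re := by
    have h5 := congrArg (fun M : Matrix (Fin N) (Fin N) ℂ => M.trace.re) h2
    simpa [trace_sub, trace_smul, Complex.sub_re, smul_eq_mul, Complex.re_ofReal_mul] using h5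
  nlinarith [mul_nonneg hε.le hpos]

/-- **Concavity of the root fidelity** in its second argument: for a fixed density
matrix ρ, σ ↦ Tr √(√ρ σ √ρ) is concave on the set of density matrices. -/
theorem rootFidelity_concave
    {N : ℕ} (ρ : Matrix (Fin N) (Fin N) ℂ) (hρ : IsDensityMatrix ρ)
    (σ₁ σ₂ : Matrix (Fin N) (Fin N) ℂ)
    (h₁ : IsDensityMatrix σ₁) (h₂ : IsDensityMatrix σ₂)
    (t : ℝ) (ht0 : 0 ≤ t) (ht1 : t ≤ 1) :
    t * rootFidelity ρ σ₁ + (1 - t) * rootFidelity ρ σ₂ ≤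
      rootFidelity ρ ((t : ℂ) • σ₁ + ((1 - t : ℝ) : ℂ) • σ₂) := by
  obtain ⟨hρps, -⟩ := hρ
  have hRdef : psdSqrt ρ = hρps.sqrt := dif_pos hρps
  set R := psdSqrt ρ with hR0
  have hR : R.PosSemidef := by rw [hRdef]; exact hρps.posSemidef_sqrt
  have conj : ∀ {σ : Matrix (Fin N) (Fin N) ℂ}, σ.PosSemidef → (R * σ * R).PosSemidef := by
    intro σ h
    have h4 := h.conjTranspose_mul_mul_same R
    rwa [hR.1] at h4
  have ht0' : (0:ℝ) ≤ 1 - t := by linarith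
  set σmix := (t : ℂ) • σ₁ + ((1 - t : ℝ) : ℂ) • σ₂ with hσmixdef
  have hσmix : σmix.PosSemidef := (smul_posSemidef' ht0 h₁.1).add (smul_posSemidef' ht0' h₂.1)
  have hA1 : (R * σ₁ * R).PosSemidef := conj h₁.1
  have hA2 : (R * σ₂ * R).PosSemidef := conj h₂.1
  have hAmix : (R * σmix * R).PosSemidef := conj hσmix
  have psdSqrt_eq : ∀ {M : Matrix (Fin N) (Fin N) ℂ} (h : M.PosSemidef),
      psdSqrt M = h.sqrt := fun h => dif_pos h
  have fid1 : rootFidelity ρ σ₁ = hA1.sqrt.trace.re := by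
    show (psdSqrt (R * σ₁ * R)).trace.re = _
    rw [psdSqrt_eq hA1]
  have fid2 : rootFidelity ρ σ₂ = hA2.sqrt.trace.re := by
    show (psdSqrt (R * σ₂ * R)).trace.re = _
    rw [psdSqrt_eq hA2]
  have fidmix : rootFidelity ρ σmix = hAmix.sqrt.trace.re := by
    show (psdSqrt (R * σmix * R)).trace.re = _
    rw [psdSqrt_eq hAmix]
  rw [fid1, fid2, fidmix]
  have hdec : R * σmix * R = (t:ℂ) • (R * σ₁ * R) + ((1 - t : ℝ):ℂ) • (R * σ₂ * R) := by
    rw [hσmixdef, mul_add, add_mul, mul_smul_comm, mul_smul_comm, smul_mul_assoc,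
      smul_mul_assoc]
  refine le_of_forall_pos_le_add fun ε hε => ?_
  have hN1 : (0:ℝ) < (N:ℝ) + 1 := by positivity
  set δ := 2 * ε / ((N:ℝ) + 1) with hδdef
  have hδ : 0 < δ := by positivity
  set X := hAmix.sqrt + (δ:ℂ) • 1 with hXdef
  have hXpd : X.PosDef := Matrix.PosDef.posSemidef_add hAmix.posSemidef_sqrt (smul_one_posDef' hδ)
  have h1 := amgm' hA1 hXpd
  have h2 := amgm' hA2 hXpd
  have hup := upper_bound' hAmix hδ X hXdef hXpd
  have htrX : X.trace.re = hAmix.sqrt.trace.re + δ * N := by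
    rw [hXdef, trace_add, trace_smul, trace_one]
    simp [Complex.add_re, smul_eq_mul, Complex.re_ofReal_mul]
  have hlin : (((R * σmix * R) * X⁻¹).trace).re
      = t * (((R * σ₁ * R) * X⁻¹).trace).re + (1 - t) * (((R * σ₂ * R) * X⁻¹).trace).re := by
    rw [hdec, add_mul, smul_mul_assoc, smul_mul_assoc, trace_add, trace_smul, trace_smul]
    simp [Complex.add_re, smul_eq_mul, Complex.re_ofReal_mul]
  have hδN : δ * N + δ = 2 * ε := by
    rw [hδdef]; field_simp
  have ht1' := mul_le_mul_of_nonneg_left h1 ht0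
  have ht2' := mul_le_mul_of_nonneg_left h2 ht0'
  linarith
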